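/- A measure-preserving flow (Ω, μ, (g_t)_{t∈ℝ}) on a probability space is strongly mixing if and only if it is ergodic and exhibits Keplerian shear. -/

import Mathlib

open MeasureTheory Filter
open scoped ENNReal Topology

theorem stmt4_aux {Ω : Type*} (I : MeasurableSpace Ω) [m0 : MeasurableSpace Ω]
    (μ : Measure Ω) [IsProbabilityMeasure μ]
    (g : ℝ → Ω → Ω)
    (hmeas : ∀ t, Measurable (g t))
    (hle : I ≤ m0)
    (hIdef : ∀ A : Set Ω, MeasurableSet[I] A ↔
      (MeasurableSet[m0] A ∧ ∀ t : ℝ, g t ⁻¹' A =ᵐ[μ] A)) :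
    (∀ f φ : Ω → ℝ, MemLp f 2 μ → MemLp φ 2 μ →
        Tendsto (fun t : ℝ => ∫ x, φ x * f (g t x) ∂μ) atTop
          (𝓝 ((∫ x, φ x ∂μ) * ∫ x, f x ∂μ)))
    ↔
    ((∀ A : Set Ω, MeasurableSet[m0] A → (∀ t : ℝ, g t ⁻¹' A =ᵐ[μ] A) →
        μ A = 0 ∨ μ A = 1)
      ∧
      (∀ f φ : Ω → ℝ, MemLp f 2 μ → MemLp φ 2 μ →
        Tendsto (fun t : ℝ => ∫ x, φ x * f (g t x) ∂μ) atTop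
          (𝓝 (∫ x, φ x * (μ[f|I]) x ∂μ)))) := by
  haveI : SigmaFinite (μ.trim hle) := by
    have : IsFiniteMeasure (μ.trim hle) := isFiniteMeasure_trim hle
    infer_instance
  -- key: under ergodicity, the conditional expectation is constant a.e.
  have key : (∀ A : Set Ω, MeasurableSet[m0] A → (∀ t : ℝ, g t ⁻¹' A =ᵐ[μ] A) →
      μ A = 0 ∨ μ A = 1) → ∀ f : Ω → ℝ, Integrable f μ →
      (fun _ : Ω => ∫ x, f x ∂μ) =ᵐ[μ] μ[f|I] := by
    intro erg f hf
    refine ae_eq_condExp_of_forall_setIntegral_eq hle hf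
      (fun s _ _ => (integrable_const _).integrableOn) ?_
      (StronglyMeasurable.aestronglyMeasurable
        (stronglyMeasurable_const : StronglyMeasurable[I] fun _ : Ω => ∫ x, f x ∂μ))
    intro s hs _
    obtain ⟨hsm, hsinv⟩ := (hIdef s).mp hs
    rcases erg s hsm hsinv with h0' | h1
    · rw [Measure.restrict_eq_zero.mpr h0', integral_zero_measure, integral_zero_measure]
    · have hcompl : s =ᵐ[μ] Set.univ := by
        rw [ae_eq_univ]
        have := measure_compl hsm (measure_ne_top μ s)
        simp [h1, measure_univ] at this
        exact this
      rw [Measure.restrict_congr_set hcompl, Measure.restrict_univ]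
      simp [integral_const, measure_univ]
  -- ergodicity implies the two limit values agree
  have val_eq : (∀ A : Set Ω, MeasurableSet[m0] A → (∀ t : ℝ, g t ⁻¹' A =ᵐ[μ] A) →
      μ A = 0 ∨ μ A = 1) → ∀ f φ : Ω → ℝ, MemLp f 2 μ →
      ∫ x, φ x * (μ[f|I]) x ∂μ = (∫ x, φ x ∂μ) * ∫ x, f x ∂μ := by
    intro erg f φ hf
    have hfi : Integrable f μ := hf.integrable one_le_two
    have hce := key erg f hfi
    calc ∫ x, φ x * (μ[f|I]) x ∂μ = ∫ x, φ x * (∫ y, f y ∂μ) ∂μ :=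
          integral_congr_ae (hce.mono fun x hx => by
            simp only at hx ⊢; rw [← hx])
      _ = (∫ x, φ x ∂μ) * ∫ x, f x ∂μ := integral_mul_const _ _
  constructor
  · intro hmix
    have erg : ∀ A : Set Ω, MeasurableSet[m0] A → (∀ t : ℝ, g t ⁻¹' A =ᵐ[μ] A) →
        μ A = 0 ∨ μ A = 1 := by
      intro A hA hinv
      set f : Ω → ℝ := A.indicator fun _ => (1 : ℝ) with hfdef
      have hfL2 : MemLp f 2 μ := memLp_indicator_const 2 hA 1 (Or.inr (measure_ne_top μ A))
      have hint : ∫ x, f x ∂μ = (μ A).toReal := by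
        rw [hfdef, integral_indicator_const _ hA]; simp [Measure.real]
      have hconst : ∀ t : ℝ, ∫ x, f x * f (g t x) ∂μ = (μ A).toReal := by
        intro t
        have heq : ∀ x, f x * f (g t x) = (A ∩ g t ⁻¹' A).indicator (fun _ => (1:ℝ)) x := by
          intro x
          by_cases hx : x ∈ A <;> by_cases hx' : g t x ∈ A <;>
            simp [hfdef, Set.indicator_apply, hx, hx', Set.mem_preimage]
        rw [integral_congr_ae (Filter.Eventually.of_forall heq),
          integral_indicator_const _ (hA.inter ((hmeas t) hA))]
        have : μ (A ∩ g t ⁻¹' A) = μ A := by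
          refine measure_congr ?_
          have h' := MeasureTheory.ae_eq_set_inter (ae_eq_refl (μ := μ) A) (hinv t)
          rwa [Set.inter_self] at h'
        simp [Measure.real, this]
      have h1 : Tendsto (fun t : ℝ => ∫ x, f x * f (g t x) ∂μ) atTop
          (𝓝 ((μ A).toReal * (μ A).toReal)) := by
        have := hmix f f hfL2 hfL2
        rwa [hint] at this
      have h2 : Tendsto (fun t : ℝ => ∫ x, f x * f (g t x) ∂μ) atTop
          (𝓝 ((μ A).toReal)) := by
        simp only [hconst]; exact tendsto_const_nhds
      have hae : (μ A).toReal * (μ A).toReal = (μ A).toReal :=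
        tendsto_nhds_unique h1 h2
      have hfac : (μ A).toReal * ((μ A).toReal - 1) = 0 := by nlinarith
      rcases mul_eq_zero.mp hfac with h | h
      · left
        exact ((ENNReal.toReal_eq_zero_iff _).mp h).resolve_right (measure_ne_top μ A)
      · right
        exact (ENNReal.toReal_eq_one_iff _).mp (by linarith)
    refine ⟨erg, ?_⟩
    intro f φ hf hφ
    rw [val_eq erg f φ hf]
    exact hmix f φ hf hφ
  · rintro ⟨erg, shear⟩ f φ hf hφ
    have := shear f φ hf hφ
    rwa [val_eq erg f φ hf] at this

/-- A measure-preserving flow on a probability space is strongly mixing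
if and only if it is ergodic and exhibits Keplerian shear. -/
theorem stmt4 {Ω : Type*} [m0 : MeasurableSpace Ω] (μ : Measure Ω) [IsProbabilityMeasure μ]
    (g : ℝ → Ω → Ω)
    (hmeas : ∀ t, Measurable (g t))
    (hmp : ∀ t, MeasurePreserving (g t) μ μ)
    (hflow : ∀ s t, g (s + t) = g s ∘ g t) (h0 : g 0 = id)
    (I : MeasurableSpace Ω) (hle : I ≤ m0)
    (hIdef : ∀ A : Set Ω, MeasurableSet[I] A ↔
      (MeasurableSet[m0] A ∧ ∀ t : ℝ, g t ⁻¹' A =ᵐ[μ] A)) :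
    -- strong mixing
    (∀ f φ : Ω → ℝ, MemLp f 2 μ → MemLp φ 2 μ →
        Tendsto (fun t : ℝ => ∫ x, φ x * f (g t x) ∂μ) atTop
          (𝓝 ((∫ x, φ x ∂μ) * ∫ x, f x ∂μ)))
    ↔
    -- ergodicity ...
    ((∀ A : Set Ω, MeasurableSet[m0] A → (∀ t : ℝ, g t ⁻¹' A =ᵐ[μ] A) →
        μ A = 0 ∨ μ A = 1)
      ∧
    -- ... and Keplerian shear
      (∀ f φ : Ω → ℝ, MemLp f 2 μ → MemLp φ 2 μ →
        Tendsto (fun t : ℝ => ∫ x, φ x * f (g t x) ∂μ) atTop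
          (𝓝 (∫ x, φ x * (μ[f|I]) x ∂μ)))) :=
  stmt4_aux (m0 := m0) I μ g hmeas hle hIdef
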